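/- Let G be a connected bipartite graph on n vertices with odd diameter D. Then the distance to H-palindromicity Z(G) = Σ_{k=0}^{⌊D/2⌋} |α(G,k) − α(G,D−k)| is at least ⌈n/2⌉. -/

import Mathlib

open SimpleGraph Finset

noncomputable def pairDist {V : Type*} (G : SimpleGraph V) : Sym2 V → ℕ :=
  Sym2.lift ⟨fun x y => G.dist x y, fun x y => G.dist_comm⟩

/-- Number of unordered pairs of (not necessarily distinct) vertices at distance k. -/
noncomputable def alpha {V : Type*} [Fintype V] [DecidableEq V] (G : SimpleGraph V) (k : ℕ) : ℕ :=
  (Finset.univ.filter (fun p : Sym2 V => pairDist G p = k)).card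

private lemma sum_split_aux (m : ℕ) (f : ℕ → ℤ) :
    ∑ j ∈ Finset.range (2*m+1+1), f j
      = ∑ k ∈ Finset.range (m+1), (f k + f (2*m+1-k)) := by
  have h1 : (∑ i ∈ Finset.range (m+1), f i) + ∑ i ∈ Finset.Ico (m+1) (2*m+1+1), f i
      = ∑ i ∈ Finset.range (2*m+1+1), f i :=
    Finset.sum_range_add_sum_Ico f (by omega)
  have h2 : ∑ i ∈ Finset.Ico (m+1) (2*m+1+1), f i
      = ∑ i ∈ Finset.range (m+1), f ((m+1) + i) := by
    rw [Finset.sum_Ico_eq_sum_range, show 2*m+1+1-(m+1) = m+1 from by omega]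
  have h3 : ∑ i ∈ Finset.range (m+1), f ((m+1) + i)
      = ∑ i ∈ Finset.range (m+1), f (2*m+1 - i) := by
    rw [← Finset.sum_range_reflect (fun i => f ((m+1) + i)) (m+1)]
    apply Finset.sum_congr rfl
    intro i hi
    simp only [Finset.mem_range] at hi
    congr 1
    omega
  rw [← h1, h2, h3, ← Finset.sum_add_distrib]

private lemma two_mul_card_sym2 {α : Type*} [DecidableEq α] (s : Finset α) :
    2 * s.sym2.card = s.card * (s.card + 1) := by
  rw [Finset.card_sym2, Nat.choose_two_right, Nat.add_sub_cancel]
  have h : 2 ∣ (s.card + 1) * s.card := by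
    rw [mul_comm]; exact (Nat.even_mul_succ_self _).two_dvd
  rw [Nat.mul_div_cancel' h, mul_comm]

/-- For a connected bipartite graph on n vertices of odd diameter D,
the distance to H-palindromicity is at least ⌈n/2⌉. -/
theorem stmt3 {V : Type*} [Fintype V] [DecidableEq V] (G : SimpleGraph V)
    (hG : G.Connected) (A : Set V)
    (hbip : ∀ x y, G.Adj x y → (x ∈ A ↔ y ∉ A))
    (D : ℕ) (hodd : Odd D)
    (hub : ∀ x y, G.dist x y ≤ D) (hex : ∃ x y, G.dist x y = D) :
    (Fintype.card V + 1) / 2 ≤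
      ∑ k ∈ Finset.range (D / 2 + 1),
        ((alpha G k : ℤ) - (alpha G (D - k) : ℤ)).natAbs := by
  classical
  obtain ⟨m, hD⟩ := hodd
  -- parity of distance matches sides of the bipartition
  have hpar : ∀ x y : V, ((x ∈ A) ↔ (y ∈ A)) ↔ Even (G.dist x y) := by
    intro x y
    obtain ⟨p, hp⟩ := (hG.preconnected x y).exists_walk_length_eq_dist
    rw [← hp]; clear hp
    induction p with
    | nil => simp
    | cons h p ih =>
        rename_i a b c
        have hab := hbip a b h
        simp only [SimpleGraph.Walk.length_cons, Nat.even_add_one]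
        tauto
  have hdle : ∀ p : Sym2 V, pairDist G p ≤ D := by
    intro p
    induction p using Sym2.ind with
    | _ x y => exact hub x y
  set AF : Finset V := Finset.univ.filter (· ∈ A) with hAF
  set BF : Finset V := Finset.univ.filter (fun v => v ∉ A) with hBF
  set E : Finset (Sym2 V) := Finset.univ.filter (fun p => Even (pairDist G p)) with hE
  set O : Finset (Sym2 V) := Finset.univ.filter (fun p => ¬ Even (pairDist G p)) with hO
  have hEeq : E = AF.sym2 ∪ BF.sym2 := by
    ext p
    induction p using Sym2.ind with
    | _ x y =>
      simp only [hE, Finset.mem_filter, Finset.mem_univ, true_and, Finset.mem_union,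
        Finset.mk_mem_sym2_iff, hAF, hBF]
      rw [show pairDist G s(x, y) = G.dist x y from rfl, ← hpar x y]
      tauto
  have hdisj : Disjoint AF.sym2 BF.sym2 := by
    rw [Finset.disjoint_left]
    intro p hp hq
    induction p using Sym2.ind with
    | _ x y =>
      rw [Finset.mk_mem_sym2_iff] at hp hq
      simp only [hAF, hBF, Finset.mem_filter] at hp hq
      exact hq.1.2 hp.1.2
  have habn : AF.card + BF.card = Fintype.card V := by
    rw [hAF, hBF, ← Finset.card_univ]
    exact Finset.card_filter_add_card_filter_not _
  have hEcard : 2 * E.card = AF.card * (AF.card + 1) + BF.card * (BF.card + 1) := by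
    rw [hEeq, Finset.card_union_of_disjoint hdisj, mul_add, two_mul_card_sym2,
      two_mul_card_sym2]
  have hEO : E.card + O.card = Fintype.card (Sym2 V) := by
    rw [hE, hO, ← Finset.card_univ]
    exact Finset.card_filter_add_card_filter_not _
  have hSym2card : 2 * Fintype.card (Sym2 V) = Fintype.card V * (Fintype.card V + 1) := by
    rw [← Finset.card_univ (α := Sym2 V), ← Finset.sym2_univ, two_mul_card_sym2,
      Finset.card_univ]
  -- the signed sum over all pairs
  have key : ∑ p ∈ (Finset.univ : Finset (Sym2 V)), ((-1:ℤ))^(pairDist G p)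
      = (E.card : ℤ) - O.card := by
    rw [← Finset.sum_filter_add_sum_filter_not Finset.univ (fun p => Even (pairDist G p))]
    have h1 : ∀ p ∈ E, ((-1:ℤ))^(pairDist G p) = 1 := fun p hp =>
      (Finset.mem_filter.mp hp).2.neg_one_pow
    have h2 : ∀ p ∈ O, ((-1:ℤ))^(pairDist G p) = -1 := fun p hp =>
      (Nat.not_even_iff_odd.mp (Finset.mem_filter.mp hp).2).neg_one_pow
    rw [Finset.sum_congr rfl h1, Finset.sum_congr rfl h2, Finset.sum_const, Finset.sum_const]
    simp [sub_eq_add_neg]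
  have hfib : ∑ j ∈ Finset.range (D+1), ((-1:ℤ))^j * (alpha G j : ℤ)
      = ∑ p ∈ (Finset.univ : Finset (Sym2 V)), ((-1:ℤ))^(pairDist G p) := by
    rw [← Finset.sum_fiberwise_of_maps_to (g := pairDist G)
      (fun p _ => Finset.mem_range.mpr (Nat.lt_succ_of_le (hdle p)))
      (fun p => ((-1:ℤ))^(pairDist G p))]
    apply Finset.sum_congr rfl
    intro j hj
    have : ∀ p ∈ Finset.univ.filter (fun p => pairDist G p = j),
        ((-1:ℤ))^(pairDist G p) = (-1)^j := by
      intro p hp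
      rw [(Finset.mem_filter.mp hp).2]
    rw [Finset.sum_congr rfl this, Finset.sum_const, alpha]
    simp [mul_comm]
  have hsgn : ∀ k, k ≤ m → ((-1:ℤ))^(2*m+1-k) = -((-1:ℤ))^k := by
    intro k hk
    have h : ((-1:ℤ))^(2*m+1-k) * (-1)^k = -1 := by
      rw [← pow_add, show 2*m+1-k+k = 2*m+1 from by omega]
      exact Odd.neg_one_pow ⟨m, by ring⟩
    have h3 : ((-1:ℤ))^k * (-1)^k = 1 := by
      rw [← pow_add]
      exact Even.neg_one_pow ⟨k, (two_mul k).symm ▸ rfl⟩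
    linear_combination ((-1:ℤ)^k) * h - ((-1:ℤ)^(2*m+1-k)) * h3
  have hDm : D / 2 = m := by omega
  have hT : ∑ k ∈ Finset.range (D / 2 + 1), ((-1:ℤ))^k * ((alpha G k : ℤ) - (alpha G (D - k) : ℤ))
      = (E.card : ℤ) - O.card := by
    rw [← key, ← hfib, hDm]
    rw [show D + 1 = 2*m+1+1 from by omega,
      sum_split_aux m (fun j => ((-1:ℤ))^j * (alpha G j : ℤ))]
    apply Finset.sum_congr rfl
    intro k hk
    rw [Finset.mem_range] at hk
    rw [show D - k = 2*m+1-k from by omega, hsgn k (by omega)]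
    ring
  -- bound the absolute-value sum below by the signed sum
  have hTS : ((E.card : ℤ) - O.card) ≤
      ((∑ k ∈ Finset.range (D / 2 + 1),
        ((alpha G k : ℤ) - (alpha G (D - k) : ℤ)).natAbs : ℕ) : ℤ) := by
    rw [← hT]
    push_cast
    apply Finset.sum_le_sum
    intro k _
    set z : ℤ := (alpha G k : ℤ) - (alpha G (D - k) : ℤ)
    rcases Nat.even_or_odd k with he | ho
    · rw [he.neg_one_pow, one_mul]
      exact le_abs_self z
    · rw [ho.neg_one_pow, neg_one_mul]
      exact neg_le_abs z
  -- count: E - O ≥ n/2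
  have hlow : (Fintype.card V : ℤ) ≤ 2 * ((E.card : ℤ) - O.card) := by
    have e1 : (2 * E.card : ℤ) = AF.card * (AF.card + 1) + BF.card * (BF.card + 1) := by
      exact_mod_cast congrArg (Nat.cast : ℕ → ℤ) hEcard
    have e2 : ((E.card : ℤ) + O.card) * 2 = (Fintype.card V : ℤ) * (Fintype.card V + 1) := by
      have := congrArg (Nat.cast : ℕ → ℤ) (congrArg (2 * ·) hEO)
      push_cast at this
      push_cast
      linarith [this, (by exact_mod_cast congrArg (Nat.cast : ℕ → ℤ) hSym2card :
        (2 * Fintype.card (Sym2 V) : ℤ) = Fintype.card V * (Fintype.card V + 1))]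
    have e3 : ((AF.card : ℤ) + BF.card) = Fintype.card V := by exact_mod_cast habn
    nlinarith [sq_nonneg ((AF.card : ℤ) - BF.card)]
  have final : (Fintype.card V : ℤ) ≤
      2 * ((∑ k ∈ Finset.range (D / 2 + 1),
        ((alpha G k : ℤ) - (alpha G (D - k) : ℤ)).natAbs : ℕ) : ℤ) := by
    linarith
  have : Fintype.card V ≤ 2 * ∑ k ∈ Finset.range (D / 2 + 1),
      ((alpha G k : ℤ) - (alpha G (D - k) : ℤ)).natAbs := by exact_mod_cast final
  omega
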